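/- Let d ≥ 1 and let X_1, …, X_d be independent random variables, each uniformly distributed on a set of 2d bins. Let f(X_1,…,X_d) denote the number of indices i such that X_i ≠ X_j for all j ≠ i. Then for every ε > 0, the probability that f < (e^(-1/2) - ε)·d is at most exp(-ε²·d/2). -/

import Mathlib

open MeasureTheory ProbabilityTheory Finset Real
open scoped BigOperators

lemma hoeffding_core {p : ℝ} (hp0 : 0 ≤ p) (hp1 : p ≤ 1) (u : ℝ) :
    (1 - p) * Real.exp (-(p * u)) + p * Real.exp ((1 - p) * u) ≤ Real.exp (u ^ 2 / 8) := by
  rcases eq_or_lt_of_le hp0 with h0 | h0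
  · simp only [← h0, sub_zero, zero_mul, neg_zero, Real.exp_zero, mul_one, zero_mul, add_zero,
      one_mul]
    exact Real.one_le_exp (by positivity)
  rcases eq_or_lt_of_le hp1 with h1 | h1
  · simp only [h1, sub_self, zero_mul, Real.exp_zero, mul_one, one_mul, zero_add]
    exact Real.one_le_exp (by positivity)
  -- 0 < p < 1
  set D : ℝ → ℝ := fun u => 1 - p + p * Real.exp u with hDdef
  have hDpos : ∀ u, 0 < D u := fun u => by
    have := Real.exp_pos u
    simp only [hDdef]; nlinarith
  have hD : ∀ u, HasDerivAt D (p * Real.exp u) u := fun u => by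
    exact ((Real.hasDerivAt_exp u).const_mul p).const_add (1 - p)
  set H : ℝ → ℝ := fun u => u / 4 + p - p * Real.exp u / D u with hHdef
  have hH : ∀ u, HasDerivAt H
      (1 / 4 - ((p * Real.exp u) * D u - (p * Real.exp u) * (p * Real.exp u)) / (D u) ^ 2) u := by
    intro u
    have h1 : HasDerivAt (fun u => p * Real.exp u / D u)
        (((p * Real.exp u) * D u - (p * Real.exp u) * (p * Real.exp u)) / (D u) ^ 2) u :=
      ((Real.hasDerivAt_exp u).const_mul p).div (hD u) (hDpos u).ne'
    have h2 : HasDerivAt (fun u : ℝ => u / 4 + p) (1 / 4) u := by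
      simpa using ((hasDerivAt_id u).div_const 4).add_const p
    exact h2.sub h1
  have hH' : ∀ u, 0 ≤ 1 / 4 -
      ((p * Real.exp u) * D u - (p * Real.exp u) * (p * Real.exp u)) / (D u) ^ 2 := by
    intro u
    have he := Real.exp_pos u
    have hD2 : (0:ℝ) < (D u) ^ 2 := pow_pos (hDpos u) 2
    rw [sub_nonneg, div_le_iff₀ hD2]
    have : D u = 1 - p + p * Real.exp u := rfl
    nlinarith [sq_nonneg ((1 - p) - p * Real.exp u)]
  have hHmono : Monotone H :=
    monotone_of_deriv_nonneg (fun u => (hH u).differentiableAt)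
      (fun u => by rw [(hH u).deriv]; exact hH' u)
  have hH0 : H 0 = 0 := by simp [hHdef, hDdef]
  set G : ℝ → ℝ := fun u => u ^ 2 / 8 - (Real.log (D u) - p * u) with hGdef
  have hG : ∀ u, HasDerivAt G (H u) u := by
    intro u
    have h1 : HasDerivAt (fun u => Real.log (D u)) (p * Real.exp u / D u) u :=
      (hD u).log (hDpos u).ne'
    have h2 : HasDerivAt (fun u : ℝ => u ^ 2 / 8) (2 * u / 8) u := by
      simpa using (hasDerivAt_pow 2 u).div_const 8
    have h3 : HasDerivAt (fun u : ℝ => p * u) p u := by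
      simpa using (hasDerivAt_id u).const_mul p
    have := h2.sub (h1.sub h3)
    refine HasDerivAt.congr_deriv this ?_
    show _ = u / 4 + p - p * Real.exp u / D u; ring
  have hG0 : G 0 = 0 := by simp [hGdef, hDdef]
  have hGnonneg : ∀ u, 0 ≤ G u := by
    intro u
    rcases le_total 0 u with hu | hu
    · have hmono : MonotoneOn G (Set.Ici 0) := by
        apply monotoneOn_of_deriv_nonneg (convex_Ici 0)
          (fun x _ => (hG x).differentiableAt.continuousAt.continuousWithinAt)
          (fun x _ => (hG x).differentiableAt.differentiableWithinAt)
        intro x hx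
        rw [interior_Ici] at hx
        rw [(hG x).deriv]
        have := hHmono hx.le
        rw [hH0] at this
        exact this
      have := hmono Set.self_mem_Ici (Set.mem_Ici.2 hu) hu
      rwa [hG0] at this
    · have hanti : AntitoneOn G (Set.Iic 0) := by
        apply antitoneOn_of_deriv_nonpos (convex_Iic 0)
          (fun x _ => (hG x).differentiableAt.continuousAt.continuousWithinAt)
          (fun x _ => (hG x).differentiableAt.differentiableWithinAt)
        intro x hx
        rw [interior_Iic] at hx
        rw [(hG x).deriv]
        have := hHmono hx.le
        rw [hH0] at this
        exact this
      have := hanti (Set.mem_Iic.2 hu) Set.self_mem_Iic hu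
      rwa [hG0] at this
  have key : ∀ u, Real.log (D u) ≤ p * u + u ^ 2 / 8 := by
    intro u
    have := hGnonneg u
    simp only [hGdef] at this
    linarith
  have hDle : D u ≤ Real.exp (p * u + u ^ 2 / 8) := by
    rw [← Real.exp_log (hDpos u)]
    exact Real.exp_le_exp.2 (key u)
  have := mul_le_mul_of_nonneg_left hDle (Real.exp_pos (-(p * u))).le
  calc (1 - p) * Real.exp (-(p * u)) + p * Real.exp ((1 - p) * u)
      = Real.exp (-(p * u)) * D u := by
        have : Real.exp ((1 - p) * u) = Real.exp (-(p * u)) * Real.exp u := by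
          rw [← Real.exp_add]; ring_nf
        simp only [hDdef, this]; ring
    _ ≤ Real.exp (-(p * u)) * Real.exp (p * u + u ^ 2 / 8) := this
    _ = Real.exp (u ^ 2 / 8) := by rw [← Real.exp_add]; ring_nf

lemma hoeffding_expect {κ : Type*} [Fintype κ] [Nonempty κ] (Y : κ → ℝ)
    (hmean : (𝔼 z, Y z) = 0) {c : ℝ} (hc : ∀ z z', Y z - Y z' ≤ c) (s : ℝ) :
    (𝔼 z, Real.exp (s * Y z)) ≤ Real.exp (s ^ 2 * c ^ 2 / 8) := by
  obtain ⟨zmin, hzmin⟩ := Finite.exists_min Y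
  obtain ⟨zmax, hzmax⟩ := Finite.exists_max Y
  set a := Y zmin with ha
  set b := Y zmax with hb
  have hab : a ≤ b := hzmin zmax
  have hba : b - a ≤ c := hc zmax zmin
  have ha0 : a ≤ 0 := by
    have h1 : (𝔼 _z : κ, a) ≤ 𝔼 z, Y z := Finset.expect_le_expect fun z _ => hzmin z
    rwa [Finset.expect_const Finset.univ_nonempty, hmean] at h1
  have hb0 : 0 ≤ b := by
    have h1 : (𝔼 z, Y z) ≤ 𝔼 _z : κ, b := Finset.expect_le_expect fun z _ => hzmax z
    rwa [Finset.expect_const Finset.univ_nonempty, hmean] at h1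
  rcases eq_or_lt_of_le hab with heq | hlt
  · -- all Y z = 0
    have hz0 : ∀ z, Y z = 0 := fun z => le_antisymm (by rw [← heq] at hzmax; linarith [hzmax z, ha0])
      (by linarith [hzmin z, heq ▸ hb0])
    calc (𝔼 z, Real.exp (s * Y z)) = 𝔼 _z : κ, (1:ℝ) := by
          apply Finset.expect_congr rfl; intro z _; rw [hz0 z]; simp
      _ = 1 := Finset.expect_const Finset.univ_nonempty 1
      _ ≤ _ := Real.one_le_exp (by positivity)
  · have hbapos : 0 < b - a := sub_pos.2 hlt
    have hcpos : 0 < c := lt_of_lt_of_le hbapos hba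
    -- pointwise convexity bound
    have hpt : ∀ z, Real.exp (s * Y z)
        ≤ (b - Y z) / (b - a) * Real.exp (s * a) + (Y z - a) / (b - a) * Real.exp (s * b) := by
      intro z
      have h1 : (b - Y z) / (b - a) + (Y z - a) / (b - a) = 1 := by
        field_simp
        ring
      have h2 : 0 ≤ (b - Y z) / (b - a) := div_nonneg (by linarith [hzmax z]) hbapos.le
      have h3 : 0 ≤ (Y z - a) / (b - a) := div_nonneg (by linarith [hzmin z]) hbapos.le
      have := convexOn_exp.2 (Set.mem_univ (s * a)) (Set.mem_univ (s * b)) h2 h3 h1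
      simp only [smul_eq_mul] at this
      have harg : (b - Y z) / (b - a) * (s * a) + (Y z - a) / (b - a) * (s * b) = s * Y z := by
        field_simp; ring
      rwa [harg] at this
    have hmeanbd : (𝔼 z, Real.exp (s * Y z))
        ≤ b / (b - a) * Real.exp (s * a) + (-a) / (b - a) * Real.exp (s * b) := by
      calc (𝔼 z, Real.exp (s * Y z))
          ≤ 𝔼 z, ((b - Y z) / (b - a) * Real.exp (s * a)
              + (Y z - a) / (b - a) * Real.exp (s * b)) :=
            Finset.expect_le_expect fun z _ => hpt z
        _ = b / (b - a) * Real.exp (s * a) + (-a) / (b - a) * Real.exp (s * b) := by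
            rw [Finset.expect_add_distrib]
            congr 1
            · have : (fun z => (b - Y z) / (b - a) * Real.exp (s * a))
                  = fun z => (b / (b-a) * Real.exp (s*a)) - Y z * (Real.exp (s*a) / (b-a)) := by
                funext z; field_simp
              rw [this, Finset.expect_sub_distrib, Finset.expect_const Finset.univ_nonempty,
                ← Finset.expect_mul, hmean]
              simp
            · have : (fun z => (Y z - a) / (b - a) * Real.exp (s * b))
                  = fun z => Y z * (Real.exp (s*b) / (b-a)) - (a / (b-a) * Real.exp (s*b)) := by
                funext z; field_simp
              rw [this, Finset.expect_sub_distrib, Finset.expect_const Finset.univ_nonempty,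
                ← Finset.expect_mul, hmean]
              simp only [zero_mul, zero_sub, neg_div]
              ring
    set p : ℝ := -a / (b - a) with hp
    have hp0 : 0 ≤ p := div_nonneg (by linarith) hbapos.le
    have hp1 : p ≤ 1 := by
      rw [hp, div_le_one hbapos]; linarith
    have hcore := hoeffding_core hp0 hp1 (s * (b - a))
    have e1 : 1 - p = b / (b - a) := by rw [hp]; field_simp; ring
    have e2 : -(p * (s * (b - a))) = s * a := by rw [hp]; field_simp
    have e3 : (1 - p) * (s * (b - a)) = s * b := by rw [e1]; field_simp
    rw [e2, e3, e1] at hcore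
    have : (s * (b - a)) ^ 2 / 8 ≤ s ^ 2 * c ^ 2 / 8 := by
      have h1 : (b - a) ^ 2 ≤ c ^ 2 := by nlinarith
      have h2 : (s * (b-a))^2 = s^2 * (b-a)^2 := by ring
      rw [h2]
      have := mul_le_mul_of_nonneg_left h1 (sq_nonneg s)
      linarith
    calc (𝔼 z, Real.exp (s * Y z)) ≤ _ := hmeanbd
      _ ≤ Real.exp ((s * (b - a)) ^ 2 / 8) := hcore
      _ ≤ Real.exp (s ^ 2 * c ^ 2 / 8) := Real.exp_le_exp.2 this

lemma expect_cons {κ : Type*} [Fintype κ] [Nonempty κ] {n : ℕ} (g : (Fin (n+1) → κ) → ℝ) :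
    (𝔼 x, g x) = 𝔼 y : Fin n → κ, 𝔼 z : κ, g (Fin.cons z y) := by
  have hsum : ∑ x : Fin (n+1) → κ, g x
      = ∑ y : Fin n → κ, ∑ z : κ, g (Fin.cons z y) := by
    rw [← Fintype.sum_equiv (Fin.consEquiv (fun _ : Fin (n+1) => κ))
      (fun p => g (Fin.cons p.1 p.2)) g (fun p => rfl)]
    rw [Fintype.sum_prod_type]
    exact Finset.sum_comm
  simp only [Fintype.expect_eq_sum_div_card, Finset.sum_div, ← Finset.sum_div]
  rw [hsum]
  rw [Fintype.card_fun, Fintype.card_fin, Fintype.card_fun, Fintype.card_fin, pow_succ]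
  rw [Finset.sum_comm]
  push_cast
  rw [div_div]
  ring_nf

lemma mcdiarmid_mgf {κ : Type*} [Fintype κ] [Nonempty κ] (n : ℕ)
    (g : (Fin n → κ) → ℝ) (c : ℝ)
    (hbd : ∀ (x : Fin n → κ) (i : Fin n) (y : κ), g x - g (Function.update x i y) ≤ c)
    (t : ℝ) :
    (𝔼 x, Real.exp (t * ((𝔼 x', g x') - g x))) ≤ Real.exp (n * (t ^ 2 * c ^ 2 / 8)) := by
  induction n with
  | zero =>
    have hg : ∀ x : Fin 0 → κ, g x = g default := fun x => by
      rw [Subsingleton.elim x default]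
    have hM : (𝔼 x', g x') = g default := by
      rw [show (fun x' => g x') = fun _ => g default from funext hg]
      exact Finset.expect_const Finset.univ_nonempty _
    calc (𝔼 x, Real.exp (t * ((𝔼 x', g x') - g x)))
        = 𝔼 _x : Fin 0 → κ, (1:ℝ) := by
          apply Finset.expect_congr rfl; intro x _; rw [hM, hg x]; simp
      _ = 1 := Finset.expect_const Finset.univ_nonempty _
      _ ≤ _ := by rw [Nat.cast_zero, zero_mul, Real.exp_zero]
  | succ n ih =>
    set h : (Fin n → κ) → ℝ := fun y => 𝔼 z : κ, g (Fin.cons z y) with hh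
    have hM : (𝔼 x', g x') = 𝔼 y, h y := expect_cons g
    have hhbd : ∀ (y : Fin n → κ) (i : Fin n) (y' : κ), h y - h (Function.update y i y') ≤ c := by
      intro y i y'
      have : h y - h (Function.update y i y')
          = 𝔼 z : κ, (g (Fin.cons z y) - g (Fin.cons z (Function.update y i y'))) := by
        rw [Finset.expect_sub_distrib]
      rw [this]
      calc (𝔼 z : κ, (g (Fin.cons z y) - g (Fin.cons z (Function.update y i y'))))
          ≤ 𝔼 _z : κ, c := by
            apply Finset.expect_le_expect
            intro z _
            rw [Fin.cons_update]
            exact hbd (Fin.cons z y) i.succ y'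
        _ = c := Finset.expect_const Finset.univ_nonempty _
    have hinner : ∀ y : Fin n → κ,
        (𝔼 z : κ, Real.exp (t * (h y - g (Fin.cons z y)))) ≤ Real.exp (t ^ 2 * c ^ 2 / 8) := by
      intro y
      apply hoeffding_expect (fun z => h y - g (Fin.cons z y))
      · rw [Finset.expect_sub_distrib, Finset.expect_const Finset.univ_nonempty, sub_eq_zero]
      · intro z z'
        have h1 := hbd (Fin.cons z' y) 0 z
        rw [Fin.update_cons_zero] at h1
        linarith
    calc (𝔼 x, Real.exp (t * ((𝔼 x', g x') - g x)))
        = 𝔼 y : Fin n → κ, 𝔼 z : κ, Real.exp (t * ((𝔼 x', g x') - g (Fin.cons z y))) :=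
          expect_cons _
      _ = 𝔼 y : Fin n → κ, (Real.exp (t * ((𝔼 y', h y') - h y))
            * 𝔼 z : κ, Real.exp (t * (h y - g (Fin.cons z y)))) := by
          apply Finset.expect_congr rfl
          intro y _
          rw [Finset.mul_expect]
          apply Finset.expect_congr rfl
          intro z _
          rw [← Real.exp_add, ← hM]
          ring_nf
      _ ≤ 𝔼 y : Fin n → κ, (Real.exp (t * ((𝔼 y', h y') - h y)) * Real.exp (t ^ 2 * c ^ 2 / 8)) := by
          apply Finset.expect_le_expect
          intro y _
          exact mul_le_mul_of_nonneg_left (hinner y) (Real.exp_pos _).le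
      _ = (𝔼 y : Fin n → κ, Real.exp (t * ((𝔼 y', h y') - h y))) * Real.exp (t ^ 2 * c ^ 2 / 8) :=
          (Finset.expect_mul _ _ _).symm
      _ ≤ Real.exp (n * (t ^ 2 * c ^ 2 / 8)) * Real.exp (t ^ 2 * c ^ 2 / 8) :=
          mul_le_mul_of_nonneg_right (ih h hhbd) (Real.exp_pos _).le
      _ = Real.exp ((n + 1 : ℕ) * (t ^ 2 * c ^ 2 / 8)) := by
          rw [← Real.exp_add]; congr 1; push_cast; ring

lemma iso_expect {d N : ℕ} (hd : 1 ≤ d) (hN : 2 ≤ N) (i : Fin d) :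
    (𝔼 x : Fin d → Fin N, (if ∀ j, j ≠ i → x j ≠ x i then (1:ℝ) else 0))
      = ((N - 1 : ℝ) / N) ^ (d - 1) := by
  classical
  have hN0 : (0:ℝ) < N := by positivity
  have hNne : (N:ℝ) ≠ 0 := hN0.ne'
  have hcardsub : Fintype.card {j : Fin d // j ≠ i} = d - 1 := by
    simp [Fintype.card_subtype_compl]
  have hsum : (∑ x : Fin d → Fin N, (if ∀ j, j ≠ i → x j ≠ x i then (1:ℝ) else 0))
      = (N : ℝ) * (N - 1) ^ (d - 1) := by
    rw [← Fintype.sum_equiv (Equiv.funSplitAt i (Fin N)).symm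
      (fun p => if ∀ j, j ≠ i → (Equiv.funSplitAt i (Fin N)).symm p j
          ≠ (Equiv.funSplitAt i (Fin N)).symm p i then (1:ℝ) else 0)
      (fun x => if ∀ j, j ≠ i → x j ≠ x i then (1:ℝ) else 0)
      (fun p => rfl)]
    rw [Fintype.sum_prod_type]
    have hself : ∀ (v : Fin N) (y : {j : Fin d // j ≠ i} → Fin N),
        (Equiv.funSplitAt i (Fin N)).symm (v, y) i = v := by
      intro v y; simp [Equiv.funSplitAt, Equiv.piSplitAt]
    have hother : ∀ (v : Fin N) (y : {j : Fin d // j ≠ i} → Fin N) (j : Fin d) (hj : j ≠ i),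
        (Equiv.funSplitAt i (Fin N)).symm (v, y) j = y ⟨j, hj⟩ := by
      intro v y j hj; simp [Equiv.funSplitAt, Equiv.piSplitAt, hj]
    have hcond : ∀ (v : Fin N) (y : {j : Fin d // j ≠ i} → Fin N),
        (if ∀ j, j ≠ i → (Equiv.funSplitAt i (Fin N)).symm (v, y) j
            ≠ (Equiv.funSplitAt i (Fin N)).symm (v, y) i then (1:ℝ) else 0)
          = ∏ j' : {j : Fin d // j ≠ i}, (if y j' ≠ v then (1:ℝ) else 0) := by
      intro v y
      rw [Finset.prod_boole]
      congr 1
      simp only [eq_iff_iff]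
      constructor
      · intro h j' _; have := h j' j'.2; rwa [hother v y j' j'.2, hself] at this
      · intro h j hj; rw [hother v y j hj, hself]; exact h ⟨j, hj⟩ (Finset.mem_univ _)
    calc (∑ v : Fin N, ∑ y : {j : Fin d // j ≠ i} → Fin N,
            if ∀ j, j ≠ i → (Equiv.funSplitAt i (Fin N)).symm (v, y) j
              ≠ (Equiv.funSplitAt i (Fin N)).symm (v, y) i then (1:ℝ) else 0)
        = ∑ v : Fin N, ∑ y : {j : Fin d // j ≠ i} → Fin N,
            ∏ j' : {j : Fin d // j ≠ i}, (if y j' ≠ v then (1:ℝ) else 0) := by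
          apply Finset.sum_congr rfl; intro v _
          apply Finset.sum_congr rfl; intro y _
          exact hcond v y
      _ = ∑ v : Fin N, ∏ j' : {j : Fin d // j ≠ i}, (∑ w : Fin N, if w ≠ v then (1:ℝ) else 0) := by
          apply Finset.sum_congr rfl; intro v _
          rw [Fintype.prod_sum]
      _ = ∑ v : Fin N, ((N:ℝ) - 1) ^ (d - 1) := by
          apply Finset.sum_congr rfl; intro v _
          have hs : (∑ w : Fin N, if w ≠ v then (1:ℝ) else 0) = (N:ℝ) - 1 := by
            rw [Finset.sum_boole]
            have : Finset.filter (fun w : Fin N => w ≠ v) Finset.univ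
                = Finset.univ.erase v := by
              ext w; simp [Finset.mem_erase, and_comm]
            rw [this, Finset.card_erase_of_mem (Finset.mem_univ v)]
            simp only [Finset.card_univ, Fintype.card_fin]
            have : 1 ≤ N := by omega
            push_cast [Nat.cast_sub this]
            ring
          rw [hs, Finset.prod_const, Finset.card_univ, hcardsub]
      _ = (N : ℝ) * (N - 1) ^ (d - 1) := by
          rw [Finset.sum_const, Finset.card_univ, Fintype.card_fin, nsmul_eq_mul]
  rw [Fintype.expect_eq_sum_div_card, hsum, Fintype.card_fun, Fintype.card_fin, Fintype.card_fin]
  rw [div_pow]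
  have hd' : d = (d - 1) + 1 := by omega
  rw [hd']
  push_cast
  rw [pow_succ]
  field_simp

lemma ratio_ge {d : ℕ} (hd : 1 ≤ d) :
    Real.exp (-(1/2)) ≤ (((2*d : ℕ) - 1 : ℝ) / (2*d : ℕ)) ^ (d - 1) := by
  have hd0 : (0:ℝ) < d := by exact_mod_cast hd
  set D : ℝ := (d : ℝ) with hD
  have h2d : ((2*d : ℕ) : ℝ) = 2 * D := by push_cast; ring
  have hd1 : (1:ℝ) ≤ D := by rw [hD]; exact_mod_cast hd
  have hden : (0:ℝ) < 2 * D - 1 := by linarith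
  set t : ℝ := 1 / (2 * D - 1) with ht
  have htpos : 0 < t := by positivity
  have hexpt : Real.exp (-t) ≤ (2 * D - 1) / (2 * D) := by
    have h1 : 1 + t ≤ Real.exp t := by linarith [Real.add_one_le_exp t]
    have h1' : (1 + t) * Real.exp (-t) ≤ 1 := by
      have := mul_le_mul_of_nonneg_right h1 (Real.exp_pos (-t)).le
      rwa [← Real.exp_add, add_neg_cancel, Real.exp_zero] at this
    have h2 : (1 + t) = (2 * D) / (2 * D - 1) := by
      rw [ht]; field_simp; ring
    rw [h2] at h1'
    rw [le_div_iff₀ (by positivity : (0:ℝ) < 2 * D)]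
    have hx : 0 < (2:ℝ) * D / (2 * D - 1) := by positivity
    calc Real.exp (-t) * (2 * D)
        = (2 * D / (2 * D - 1) * Real.exp (-t)) * (2 * D - 1) := by field_simp
      _ ≤ 1 * (2 * D - 1) := mul_le_mul_of_nonneg_right h1' hden.le
      _ = 2 * D - 1 := one_mul _
  have hpow : Real.exp (-(1/2)) ≤ Real.exp (-t) ^ (d - 1) := by
    rw [← Real.exp_nat_mul]
    apply Real.exp_le_exp.2
    have hcast : ((d - 1 : ℕ) : ℝ) = D - 1 := by
      push_cast [Nat.cast_sub hd]; ring
    rw [hcast]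
    have : (D - 1) * t ≤ 1 / 2 := by
      rw [ht, mul_one_div, div_le_div_iff₀ hden (by norm_num : (0:ℝ) < 2)]
      nlinarith
    linarith
  calc Real.exp (-(1/2)) ≤ Real.exp (-t) ^ (d - 1) := hpow
    _ ≤ ((2 * D - 1) / (2 * D)) ^ (d - 1) :=
        pow_le_pow_left₀ (Real.exp_pos _).le hexpt _
    _ = (((2*d : ℕ) - 1 : ℝ) / (2*d : ℕ)) ^ (d - 1) := by rw [h2d]

lemma transfer_prob {d N : ℕ} (hN : 0 < N) {Ω : Type*} [MeasurableSpace Ω]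
    (μ : Measure Ω) [IsProbabilityMeasure μ]
    (X : Fin d → Ω → Fin N) (hmeas : ∀ i, Measurable (X i))
    (hindep : iIndepFun X μ)
    (hunif : ∀ i, ∀ b : Fin N, μ {ω | X i ω = b} = ((N : ℕ) : ENNReal)⁻¹)
    (cond : (Fin d → Fin N) → Prop) [DecidablePred cond] :
    (μ {ω | cond (fun i => X i ω)}).toReal
      = ((Finset.univ.filter cond).card : ℝ) / (N : ℝ) ^ d := by
  set A : (Fin d → Fin N) → Set Ω := fun x => ⋂ i, X i ⁻¹' {x i} with hA
  have hAmeas : ∀ x, MeasurableSet (A x) :=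
    fun x => MeasurableSet.iInter (fun i => hmeas i (measurableSet_singleton _))
  have hAmu : ∀ x, μ (A x) = ((N : ENNReal))⁻¹ ^ d := by
    intro x
    rw [hA]
    rw [hindep.meas_iInter (fun i => ⟨{x i}, measurableSet_singleton _, rfl⟩)]
    have : ∀ i, μ (X i ⁻¹' {x i}) = ((N : ENNReal))⁻¹ := by
      intro i
      have : X i ⁻¹' {x i} = {ω | X i ω = x i} := by
        ext ω; simp
      rw [this, hunif i (x i)]
    simp only [this]
    rw [Finset.prod_const, Finset.card_univ, Fintype.card_fin]
  have hunion : {ω | cond (fun i => X i ω)}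
      = ⋃ x ∈ Finset.univ.filter cond, A x := by
    ext ω
    simp only [Set.mem_setOf_eq, Set.mem_iUnion, Finset.mem_filter, Finset.mem_univ, true_and,
      hA, Set.mem_iInter, Set.mem_preimage, Set.mem_singleton_iff]
    constructor
    · intro h
      exact ⟨fun i => X i ω, h, fun i => rfl⟩
    · rintro ⟨x, hx, h⟩
      have : (fun i => X i ω) = x := funext h
      rwa [this]
  have hdisj : (↑(Finset.univ.filter cond) : Set (Fin d → Fin N)).PairwiseDisjoint A := by
    intro x _ x' _ hxx'
    have : ∃ i, x i ≠ x' i := by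
      by_contra h
      push_neg at h
      exact hxx' (funext h)
    obtain ⟨i, hi⟩ := this
    apply Set.disjoint_left.2
    intro ω hω hω'
    have h1 : X i ω = x i := by
      have := Set.mem_iInter.1 hω i; simpa using this
    have h2 : X i ω = x' i := by
      have := Set.mem_iInter.1 hω' i; simpa using this
    exact hi (h1 ▸ h2 ▸ rfl)
  rw [hunion, measure_biUnion_finset hdisj (fun x _ => hAmeas x)]
  have : ∀ x ∈ Finset.univ.filter cond, μ (A x) = ((N : ENNReal))⁻¹ ^ d :=
    fun x _ => hAmu x
  rw [Finset.sum_congr rfl this, Finset.sum_const, nsmul_eq_mul]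
  rw [ENNReal.toReal_mul, ENNReal.toReal_pow, ENNReal.toReal_inv]
  simp only [ENNReal.toReal_natCast]
  rw [inv_pow, div_eq_mul_inv]

lemma iso_bdd {d N : ℕ} (x : Fin d → Fin N) (k : Fin d) (y : Fin N) :
    ((Finset.univ.filter (fun i : Fin d => ∀ j, j ≠ i → x j ≠ x i)).card : ℝ)
      - ((Finset.univ.filter (fun i : Fin d => ∀ j, j ≠ i →
          Function.update x k y j ≠ Function.update x k y i)).card : ℝ) ≤ 2 := by
  classical
  set x' := Function.update x k y with hx'
  set S := Finset.univ.filter (fun i : Fin d => ∀ j, j ≠ i → x j ≠ x i) with hS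
  set S' := Finset.univ.filter (fun i : Fin d => ∀ j, j ≠ i → x' j ≠ x' i) with hS'
  have hsub : S ⊆ (S' ∪ {k}) ∪ S.filter (fun i => x i = y) := by
    intro i hi
    have hiso : ∀ j, j ≠ i → x j ≠ x i := (Finset.mem_filter.1 hi).2
    by_cases hik : i = k
    · exact Finset.mem_union_left _ (Finset.mem_union_right _ (by simp [hik]))
    by_cases hiy : x i = y
    · exact Finset.mem_union_right _ (Finset.mem_filter.2 ⟨hi, hiy⟩)
    · apply Finset.mem_union_left _ (Finset.mem_union_left _ _)
      rw [hS', Finset.mem_filter]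
      refine ⟨Finset.mem_univ _, ?_⟩
      intro j hj
      have hxi : x' i = x i := Function.update_of_ne hik y x
      rw [hxi]
      by_cases hjk : j = k
      · rw [hjk, hx', Function.update_self]
        exact fun h => hiy h.symm
      · rw [hx', Function.update_of_ne hjk y x]
        exact hiso j hj
  have hone : (S.filter (fun i => x i = y)).card ≤ 1 := by
    apply Finset.card_le_one.2
    intro a ha b hb
    have hA := Finset.mem_filter.1 ha
    have hB := Finset.mem_filter.1 hb
    have haiso : ∀ j, j ≠ a → x j ≠ x a := (Finset.mem_filter.1 hA.1).2
    by_contra hab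
    exact haiso b (fun h => hab h.symm) (by rw [hB.2, hA.2])
  have hcard : S.card ≤ S'.card + 2 := by
    calc S.card ≤ ((S' ∪ {k}) ∪ S.filter (fun i => x i = y)).card := Finset.card_le_card hsub
      _ ≤ (S' ∪ {k}).card + (S.filter (fun i => x i = y)).card := Finset.card_union_le _ _
      _ ≤ (S'.card + 1) + 1 := by
          have h1 : (S' ∪ {k}).card ≤ S'.card + 1 := by
            have := Finset.card_union_le S' ({k} : Finset (Fin d))
            simpa using this
          omega
      _ = S'.card + 2 := by omega
  have := (Nat.cast_le (α := ℝ)).2 hcard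
  push_cast at this
  linarith


set_option maxHeartbeats 1000000 in
/-- Let `d ≥ 1` and let `X 1, …, X d` be independent random variables, each uniform on a
set of `2d` bins.  Let `f` count the indices `i` with `X i ≠ X j` for all `j ≠ i`.  Then
for every `ε > 0`, `ℙ(f < (e^(-1/2) - ε) · d) ≤ exp(-ε² d / 2)` (McDiarmid). -/
theorem mcdiarmid_singletons
    {d : ℕ} (hd : 1 ≤ d)
    {Ω : Type*} [MeasurableSpace Ω] (μ : Measure Ω) [IsProbabilityMeasure μ]
    (X : Fin d → Ω → Fin (2 * d))
    (hmeas : ∀ i, Measurable (X i))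
    (hindep : iIndepFun X μ)
    (hunif : ∀ i, ∀ b : Fin (2 * d), μ {ω | X i ω = b} = ((2 * d : ℕ) : ENNReal)⁻¹)
    (ε : ℝ) (hε : 0 < ε) :
    (μ {ω | ((Finset.univ.filter
        (fun i : Fin d => ∀ j, j ≠ i → X j ω ≠ X i ω)).card : ℝ)
          < (Real.exp (-(1 / 2)) - ε) * d}).toReal
      ≤ Real.exp (-(ε ^ 2 * d) / 2) := by
  classical
  have hN2 : 2 ≤ 2 * d := by omega
  have hN0 : (0:ℝ) < (2 * d : ℕ) := by
    have : 0 < 2 * d := by omega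
    exact_mod_cast this
  haveI : Nonempty (Fin (2 * d)) := ⟨⟨0, by omega⟩⟩
  set F : (Fin d → Fin (2 * d)) → ℝ :=
    fun x => ((Finset.univ.filter (fun i : Fin d => ∀ j, j ≠ i → x j ≠ x i)).card : ℝ) with hF
  set cond : (Fin d → Fin (2 * d)) → Prop :=
    fun x => F x < (Real.exp (-(1 / 2)) - ε) * d with hcond
  haveI : DecidablePred cond := Classical.decPred _
  -- transfer to the finite product space
  have htrans : (μ {ω | cond (fun i => X i ω)}).toReal
      = ((Finset.univ.filter cond).card : ℝ) / ((2 * d : ℕ) : ℝ) ^ d :=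
    transfer_prob (by omega) μ X hmeas hindep hunif cond
  have hsetEq : {ω | ((Finset.univ.filter
        (fun i : Fin d => ∀ j, j ≠ i → X j ω ≠ X i ω)).card : ℝ)
          < (Real.exp (-(1 / 2)) - ε) * d} = {ω | cond (fun i => X i ω)} := by
    ext ω
    simp only [Set.mem_setOf_eq, hcond, hF]
  rw [hsetEq, htrans]
  -- expectation lower bound
  set M : ℝ := 𝔼 x : Fin d → Fin (2 * d), F x with hM
  have hFsum : ∀ x : Fin d → Fin (2 * d),
      F x = ∑ i : Fin d, (if ∀ j, j ≠ i → x j ≠ x i then (1:ℝ) else 0) := by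
    intro x
    rw [hF]
    rw [Finset.sum_boole]
  have hMlow : Real.exp (-(1/2)) * d ≤ M := by
    have h1 : M = ∑ i : Fin d, (𝔼 x : Fin d → Fin (2 * d),
        (if ∀ j, j ≠ i → x j ≠ x i then (1:ℝ) else 0)) := by
      rw [hM]
      rw [show (fun x : Fin d → Fin (2 * d) => F x) = fun x => ∑ i : Fin d,
        (if ∀ j, j ≠ i → x j ≠ x i then (1:ℝ) else 0) from funext hFsum]
      exact Finset.expect_sum_comm _ _ _
    have h2 : ∀ i : Fin d, (𝔼 x : Fin d → Fin (2 * d),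
        (if ∀ j, j ≠ i → x j ≠ x i then (1:ℝ) else 0)) = (((2 * d : ℕ) - 1 : ℝ) / ((2 * d : ℕ) : ℝ)) ^ (d - 1) :=
      fun i => iso_expect hd hN2 i
    rw [h1, Finset.sum_congr rfl (fun i _ => h2 i), Finset.sum_const, Finset.card_univ,
      Fintype.card_fin, nsmul_eq_mul]
    have h3 := ratio_ge hd
    have hd0 : (0:ℝ) ≤ d := by positivity
    calc Real.exp (-(1/2)) * d = d * Real.exp (-(1/2)) := by ring
      _ ≤ d * (((2 * d : ℕ) - 1 : ℝ) / ((2 * d : ℕ) : ℝ)) ^ (d - 1) := by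
          apply mul_le_mul_of_nonneg_left _ hd0
          exact_mod_cast h3
  -- bounded differences
  have hbd : ∀ (x : Fin d → Fin (2 * d)) (i : Fin d) (y : Fin (2 * d)),
      F x - F (Function.update x i y) ≤ 2 := by
    intro x i y
    have := iso_bdd x i y
    rw [hF]
    convert this using 3
  -- mgf bound
  have hmgf := mcdiarmid_mgf d F 2 hbd ε
  rw [← hM] at hmgf
  -- Markov
  have hpt : ∀ x : Fin d → Fin (2 * d), (if cond x then (1:ℝ) else 0)
      ≤ Real.exp (ε * (M - F x) + (-(ε^2 * d))) := by
    intro x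
    by_cases hx : cond x
    · rw [if_pos hx]
      apply Real.one_le_exp
      have h1 : F x < (Real.exp (-(1 / 2)) - ε) * d := hx
      have h2 : (Real.exp (-(1 / 2)) - ε) * d = Real.exp (-(1/2)) * d - ε * d := by ring
      have h3 : F x < M - ε * d := by rw [h2] at h1; linarith
      nlinarith
    · rw [if_neg hx]
      exact (Real.exp_pos _).le
  have hP : ((Finset.univ.filter cond).card : ℝ) / ((2 * d : ℕ) : ℝ) ^ d
      = 𝔼 x : Fin d → Fin (2 * d), (if cond x then (1:ℝ) else 0) := by
    rw [Fintype.expect_eq_sum_div_card, Finset.sum_boole, Fintype.card_fun, Fintype.card_fin,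
      Fintype.card_fin]
    push_cast
    rfl
  rw [hP]
  calc (𝔼 x : Fin d → Fin (2 * d), (if cond x then (1:ℝ) else 0))
      ≤ 𝔼 x : Fin d → Fin (2 * d), Real.exp (ε * (M - F x) + (-(ε^2 * d))) :=
        Finset.expect_le_expect (fun x _ => hpt x)
    _ = Real.exp (-(ε^2 * d)) * 𝔼 x : Fin d → Fin (2 * d), Real.exp (ε * (M - F x)) := by
        rw [Finset.mul_expect]
        apply Finset.expect_congr rfl
        intro x _
        rw [← Real.exp_add]
        ring_nf
    _ ≤ Real.exp (-(ε^2 * d)) * Real.exp (d * (ε ^ 2 * 2 ^ 2 / 8)) :=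
        mul_le_mul_of_nonneg_left hmgf (Real.exp_pos _).le
    _ = Real.exp (-(ε ^ 2 * d) / 2) := by
        rw [← Real.exp_add]
        congr 1
        ring
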